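/- Let A be a proper K-subalgebra of K[x] of finite codimension. Then Sp(A) is finite, and writing Sp(A) = {α_1, ..., α_s} and π_A = (x − α_1)(x − α_2)⋯(x − α_s), there exists an integer N > 1 such that x^i · π_A^N ∈ A for every integer i ≥ 0. -/

import Mathlib

open Polynomial

/-- The spectrum of a subalgebra `A` of `K[x]`. -/
def subalgebraSpectrum {K : Type*} [Field K] (A : Subalgebra K (Polynomial K)) : Set K :=
  {α | (∀ f ∈ A, (Polynomial.derivative f).eval α = 0) ∨
    ∃ β : K, β ≠ α ∧ ∀ f ∈ A, f.eval α = f.eval β}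

open Finset


private lemma exists_mul_mem_aux {K : Type*} [Field K]
    (A : Subalgebra K (Polynomial K))
    (hfin : FiniteDimensional K (Polynomial K ⧸ Subalgebra.toSubmodule A))
    (p : Polynomial K) (hp : p ∈ A) (hpd : 1 ≤ p.natDegree) (v : Polynomial K) :
    ∃ u : Polynomial K, u ≠ 0 ∧ u ∈ A ∧ u * v ∈ A := by
  have hdep := Module.Finite.not_linearIndependent_of_infinite
    (R := K) (v := fun n : ℕ => (Subalgebra.toSubmodule A).mkQ (p ^ n * v))
  rw [not_linearIndependent_iff] at hdep
  obtain ⟨t, g, hsum, n₀, hn₀t, hgn₀⟩ := hdep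
  have h0 : (Subalgebra.toSubmodule A).mkQ (∑ n ∈ t, g n • (p ^ n * v)) = 0 := by
    rw [map_sum]; simp only [map_smul]; exact hsum
  have hmem : (∑ n ∈ t, g n • (p ^ n * v)) ∈ Subalgebra.toSubmodule A := by
    rwa [← Submodule.Quotient.mk_eq_zero, ← Submodule.mkQ_apply]
  refine ⟨∑ n ∈ t, g n • p ^ n, ?_, ?_, ?_⟩
  · set q : Polynomial K := ∑ n ∈ t, C (g n) * X ^ n with hq
    have hqc : q.coeff n₀ = g n₀ := by
      rw [hq, finset_sum_coeff]
      rw [Finset.sum_eq_single n₀ (fun n _ hn => by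
        simp [coeff_C_mul, coeff_X_pow, Ne.symm hn]) (fun h => absurd hn₀t h)]
      simp [coeff_C_mul, coeff_X_pow]
    have hq0 : q ≠ 0 := fun h => hgn₀ (by rw [← hqc, h, coeff_zero])
    have hcomp : q.comp p = ∑ n ∈ t, g n • p ^ n := by
      rw [hq]
      simp only [Polynomial.comp, eval₂_finset_sum, eval₂_mul, eval₂_C, eval₂_X_pow,
        smul_eq_C_mul]
    intro hzero
    rcases comp_eq_zero_iff.mp (by rw [hcomp, hzero]) with h | h
    · exact hq0 h
    · have := h.2
      have : p.natDegree = 0 := by rw [this]; exact natDegree_C _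
      omega
  · exact sum_mem fun n _ => A.smul_mem (pow_mem hp n) (g n)
  · have : (∑ n ∈ t, g n • p ^ n) * v = ∑ n ∈ t, g n • (p ^ n * v) := by
      rw [Finset.sum_mul]
      exact Finset.sum_congr rfl fun n _ => smul_mul_assoc _ _ _
    rw [this]
    exact hmem

private lemma exists_nonconstant_mem_aux {K : Type*} [Field K]
    (A : Subalgebra K (Polynomial K))
    (hfin : FiniteDimensional K (Polynomial K ⧸ Subalgebra.toSubmodule A)) :
    ∃ p ∈ A, 1 ≤ p.natDegree := by
  have hdep := Module.Finite.not_linearIndependent_of_infinite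
    (R := K) (v := fun n : ℕ => (Subalgebra.toSubmodule A).mkQ (X ^ (n + 1)))
  rw [not_linearIndependent_iff] at hdep
  obtain ⟨t, g, hsum, n₀, hn₀t, hgn₀⟩ := hdep
  have h0 : (Subalgebra.toSubmodule A).mkQ (∑ n ∈ t, g n • (X : Polynomial K) ^ (n + 1)) = 0 := by
    rw [map_sum]; simp only [map_smul]; exact hsum
  have hmem : (∑ n ∈ t, g n • (X : Polynomial K) ^ (n + 1)) ∈ Subalgebra.toSubmodule A := by
    rwa [← Submodule.Quotient.mk_eq_zero, ← Submodule.mkQ_apply]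
  refine ⟨∑ n ∈ t, g n • (X : Polynomial K) ^ (n + 1), hmem, ?_⟩
  have hqc : (∑ n ∈ t, g n • (X : Polynomial K) ^ (n + 1)).coeff (n₀ + 1) = g n₀ := by
    rw [finset_sum_coeff]
    rw [Finset.sum_eq_single n₀ (fun n _ hn => by
      simp only [coeff_smul, coeff_X_pow]
      rw [if_neg (by omega)]; simp)
      (fun h => absurd hn₀t h)]
    simp [coeff_smul, coeff_X_pow]
  have := le_natDegree_of_ne_zero (by rw [hqc]; exact hgn₀)
  omega

private lemma exists_conductor_elt {K : Type*} [Field K]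
    (A : Subalgebra K (Polynomial K))
    (hfin : FiniteDimensional K (Polynomial K ⧸ Subalgebra.toSubmodule A)) :
    ∃ h₀ : Polynomial K, h₀ ≠ 0 ∧ ∀ f : Polynomial K, h₀ * f ∈ A := by
  obtain ⟨p, hpA, hpd⟩ := exists_nonconstant_mem_aux A hfin
  set d := p.natDegree with hd
  choose u hu0 huA huX using fun j : ℕ => exists_mul_mem_aux A hfin p hpA hpd (X ^ j)
  set h₀ := ∏ j ∈ Finset.range d, u j with hh₀
  have h₀0 : h₀ ≠ 0 := Finset.prod_ne_zero_iff.2 fun j _ => hu0 j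
  have key : ∀ j : ℕ, h₀ * X ^ j ∈ A := by
    intro j
    induction j using Nat.strong_induction_on with
    | _ j ih =>
      by_cases hjd : j < d
      · have hsplit : h₀ = (∏ i ∈ (Finset.range d).erase j, u i) * u j :=
          (Finset.prod_erase_mul _ _ (Finset.mem_range.2 hjd)).symm
        rw [hsplit, mul_assoc]
        exact mul_mem (prod_mem fun i _ => huA i) (huX j)
      · push_neg at hjd
        obtain ⟨k, rfl⟩ : ∃ k, j = d + k := ⟨j - d, by omega⟩
        set r := p.eraseLead with hr
        have hrd : r.natDegree < d := lt_of_le_of_lt (eraseLead_natDegree_le p) (by omega)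
        have hpr : r + C p.leadingCoeff * X ^ d = p := eraseLead_add_C_mul_X_pow p
        have hlc : p.leadingCoeff ≠ 0 := leadingCoeff_ne_zero.2 (fun h => by
          rw [h] at hd; simp [hd] at hpd)
        -- h₀ * X^(d+k) = lc⁻¹ • (p * (h₀ * X^k) - r * (h₀ * X^k))
        have hmem1 : p * (h₀ * X ^ k) ∈ A :=
          mul_mem hpA (ih k (by omega))
        have hmem2 : r * (h₀ * X ^ k) ∈ A := by
          have hrsum : r = ∑ i ∈ Finset.range d, C (r.coeff i) * X ^ i := by
            conv_lhs => rw [r.as_sum_range' d hrd]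
            exact Finset.sum_congr rfl fun i _ => (C_mul_X_pow_eq_monomial).symm
          rw [hrsum, Finset.sum_mul]
          refine sum_mem fun i hi => ?_
          have : C (r.coeff i) * X ^ i * (h₀ * X ^ k) = r.coeff i • (h₀ * X ^ (i + k)) := by
            rw [smul_eq_C_mul, pow_add]; ring
          rw [this]
          exact A.smul_mem (ih (i + k) (by
            have := Finset.mem_range.1 hi; omega)) _
        have heq : h₀ * X ^ (d + k)
            = p.leadingCoeff⁻¹ • (p * (h₀ * X ^ k) - r * (h₀ * X ^ k)) := by
          rw [smul_eq_C_mul]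
          have : p * (h₀ * X ^ k) - r * (h₀ * X ^ k) = C p.leadingCoeff * (h₀ * X ^ (d + k)) := by
            linear_combination (h₀ * X ^ k) * hpr.symm
          rw [this, ← mul_assoc, ← C_mul, inv_mul_cancel₀ hlc, C_1, one_mul]
        rw [heq]
        exact A.smul_mem (sub_mem hmem1 hmem2) _
  refine ⟨h₀, h₀0, fun f => ?_⟩
  induction f using Polynomial.induction_on' with
  | add f g hf hg => rw [mul_add]; exact add_mem hf hg
  | monomial n a =>
    have : h₀ * monomial n a = a • (h₀ * X ^ n) := by
      rw [smul_eq_C_mul, ← C_mul_X_pow_eq_monomial]; ring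
    rw [this]
    exact A.smul_mem (key n) _

private lemma root_mem_spectrum {K : Type*} [Field K] [IsAlgClosed K]
    (A : Subalgebra K (Polynomial K)) (h : Polynomial K) (hh0 : h ≠ 0)
    (hcond : ∀ f : Polynomial K, (∀ g : Polynomial K, f * g ∈ A) ↔ h ∣ f)
    {α : K} (hα : h.eval α = 0) : α ∈ subalgebraSpectrum A := by
  classical
  by_contra hnot
  simp only [subalgebraSpectrum, Set.mem_setOf_eq, not_or] at hnot
  obtain ⟨hd, hs⟩ := hnot
  push_neg at hd hs
  obtain ⟨f₁, hf₁A, hf₁d⟩ := hd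
  -- hs : ∀ β, β ≠ α → ∃ f ∈ A, f.eval α ≠ f.eval β
  have hCmem : ∀ a : K, (C a : Polynomial K) ∈ A := fun a => by
    simpa [Polynomial.algebraMap_eq] using A.algebraMap_mem a
  set m := h.rootMultiplicity α with hm
  have hm1 : 0 < m := (rootMultiplicity_pos hh0).2 hα
  set g₀ := h /ₘ (X - C α) ^ m with hg₀def
  have hg₀ : (X - C α) ^ m * g₀ = h := pow_mul_divByMonic_rootMultiplicity_eq h α
  have hg₀α : g₀.eval α ≠ 0 := eval_divByMonic_pow_rootMultiplicity_ne_zero α hh0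
  set D := h.natDegree with hD
  -- separating elements
  have hr : ∀ β : K, ∃ q : Polynomial K, q ∈ A ∧ (β ≠ α → (q.eval β = 0 ∧ q.eval α ≠ 0)) := by
    intro β
    by_cases hβ : β ≠ α
    · obtain ⟨f, hfA, hfne⟩ := hs β hβ
      refine ⟨f - C (f.eval β), sub_mem hfA (hCmem _), fun _ => ⟨by simp, ?_⟩⟩
      simp [sub_ne_zero]
      exact hfne
    · exact ⟨1, one_mem _, fun h' => absurd h' hβ⟩
  choose r hrA hrprop using hr
  set T := h.roots.toFinset.erase α with hT
  set w := ∏ β ∈ T, (r β) ^ D with hw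
  have hwA : w ∈ A := prod_mem fun β _ => pow_mem (hrA β) D
  have hwα : w.eval α ≠ 0 := by
    rw [hw, eval_prod]
    exact Finset.prod_ne_zero_iff.2 fun β hβ => by
      rw [eval_pow]
      exact pow_ne_zero _ ((hrprop β (Finset.mem_erase.1 hβ).1).2)
  have hw0 : w ≠ 0 := fun h' => hwα (by rw [h', eval_zero])
  -- g₀ divides w
  have hg₀w : g₀ ∣ w := by
    apply Splits.dvd_of_roots_le_roots (IsAlgClosed.splits g₀)
      (fun h' => hg₀α (by rw [h', eval_zero]))
    rw [Multiset.le_iff_count]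
    intro β
    by_cases hβ : g₀.eval β = 0
    · have hβα : β ≠ α := fun h' => hg₀α (h' ▸ hβ)
      have hβh : h.eval β = 0 := by rw [← hg₀]; simp [hβ]
      have hβT : β ∈ T := Finset.mem_erase.2 ⟨hβα, Multiset.mem_toFinset.2
        ((mem_roots hh0).2 hβh)⟩
      have h1 : (Multiset.count β g₀.roots) ≤ D := by
        rw [count_roots]
        calc g₀.rootMultiplicity β ≤ Multiset.card g₀.roots := by
              rw [← count_roots]; exact Multiset.count_le_card _ _
          _ ≤ g₀.natDegree := card_roots' g₀
          _ ≤ D := natDegree_le_of_dvd (Dvd.intro_left _ hg₀) hh0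
      have h2 : D ≤ Multiset.count β w.roots := by
        rw [count_roots]
        rw [le_rootMultiplicity_iff hw0]
        calc (X - C β) ^ D ∣ (r β) ^ D :=
              pow_dvd_pow_of_dvd (dvd_iff_isRoot.2 ((hrprop β hβα).1)) D
          _ ∣ w := Finset.dvd_prod_of_mem _ hβT
      omega
    · rw [count_roots, rootMultiplicity_eq_zero hβ]
      omega
  -- the element s with a simple zero at α
  set s := (f₁ - C (f₁.eval α)) * w with hsdef
  have hsA : s ∈ A := mul_mem (sub_mem hf₁A (hCmem _)) hwA
  have hsα : s.eval α = 0 := by simp [hsdef]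
  obtain ⟨v, hv⟩ : (X - C α) ∣ s := dvd_iff_isRoot.2 hsα
  set b := v.eval α with hb
  have hbne : b ≠ 0 := by
    have h1 : (derivative s).eval α = (derivative f₁).eval α * w.eval α := by
      rw [hsdef, derivative_mul]
      simp
    have h2 : (derivative s).eval α = b := by
      rw [hv, derivative_mul]
      simp [hb]
    rw [← h2, h1]
    exact mul_ne_zero hf₁d hwα
  have hg₀s : g₀ ∣ s := hg₀w.trans (Dvd.intro_left _ rfl)
  -- key approximation lemma
  have keyB : ∀ d : ℕ, d ≤ m → ∀ t : Polynomial K,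
      ∃ e ∈ A, (X - C α) ^ m ∣ ((X - C α) ^ (m - d) * t - e) := by
    intro d
    induction d with
    | zero => exact fun _ t => ⟨0, zero_mem _, by simpa using dvd_mul_right _ t⟩
    | succ d ih =>
      intro hdm t
      set k := m - (d + 1) with hk
      have hk1 : m - d = k + 1 := by omega
      obtain ⟨t₁, ht₁⟩ : (X - C α) ∣ (t - C (t.eval α)) := dvd_iff_isRoot.2 (by simp)
      obtain ⟨t₂, ht₂⟩ : (X - C α) ∣ (1 - C ((b ^ k)⁻¹) * v ^ k) :=
        dvd_iff_isRoot.2 (by simp [← hb, inv_mul_cancel₀ (pow_ne_zero k hbne)])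
      obtain ⟨e', he'A, he'⟩ := ih (by omega) (C (t.eval α) * t₂ + t₁)
      rw [hk1] at he'
      refine ⟨C (t.eval α) * C ((b ^ k)⁻¹) * s ^ k + e',
        add_mem (mul_mem (mul_mem (hCmem _) (hCmem _)) (pow_mem hsA k)) he'A, ?_⟩
      have hident : (X - C α) ^ k * t - (C (t.eval α) * C ((b ^ k)⁻¹) * s ^ k + e')
          = (X - C α) ^ (k + 1) * (C (t.eval α) * t₂ + t₁) - e' := by
        rw [hv, mul_pow]
        linear_combination ((X - C α) ^ k) * ht₁ + (C (t.eval α) * (X - C α) ^ k) * ht₂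
      rw [hident]
      exact he'
  -- the quasi-idempotent c
  set a := w.eval α with ha
  set z := 1 - C a⁻¹ * w with hz
  set c := w * (C a⁻¹ * ∑ k ∈ Finset.range m, z ^ k) with hc
  have hcA : c ∈ A := mul_mem hwA (mul_mem (hCmem _)
    (sum_mem fun k _ => pow_mem (sub_mem (one_mem _) (mul_mem (hCmem _) hwA)) k))
  have hcz : c = 1 - z ^ m := by
    have hgeom := mul_geom_sum z m
    rw [hc, hz]
    linear_combination -hgeom + (∑ k ∈ Finset.range m, z ^ k) * hz
  have hzα : z.eval α = 0 := by
    rw [hz]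
    simp [← ha, inv_mul_cancel₀ hwα]
  have hcα : c.eval α = 1 := by
    rw [hcz]
    simp [eval_pow, hzα, zero_pow hm1.ne']
  have hg₀c : g₀ ∣ c := hg₀w.trans (dvd_mul_right w _)
  -- c is in the conductor
  have hcC : ∀ f₂ : Polynomial K, c * f₂ ∈ A := by
    intro f₂
    obtain ⟨e, heA, he⟩ := keyB m le_rfl f₂
    rw [Nat.sub_self, pow_zero, one_mul] at he
    have h1 : h ∣ c * (f₂ - e) := by
      rw [← hg₀, mul_comm c (f₂ - e)]
      exact mul_dvd_mul he hg₀c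
    obtain ⟨k₁, hk₁⟩ := h1
    have heq : c * f₂ = c * e + h * k₁ := by rw [← hk₁]; ring
    rw [heq]
    exact add_mem (mul_mem hcA heA) ((hcond h).2 dvd_rfl k₁)
  have hhc : h ∣ c := (hcond c).1 hcC
  obtain ⟨k₂, hk₂⟩ := hhc
  rw [hk₂] at hcα
  simp [hα] at hcα

theorem power_of_spectrum_polynomial_mem
    {K : Type*} [Field K] [IsAlgClosed K] [CharZero K]
    (A : Subalgebra K (Polynomial K)) (hproper : A ≠ ⊤)
    (hfin : FiniteDimensional K (Polynomial K ⧸ Subalgebra.toSubmodule A)) :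
    ∃ hSp : (subalgebraSpectrum A).Finite, ∃ N : ℕ, 1 < N ∧
      ∀ i : ℕ,
        Polynomial.X ^ i *
          (∏ α ∈ hSp.toFinset, (Polynomial.X - Polynomial.C α)) ^ N ∈ A := by
  classical
  obtain ⟨h₀, hh₀0, hh₀⟩ := exists_conductor_elt A hfin
  -- conductor ideal
  set CI : Ideal (Polynomial K) :=
    { carrier := {f | ∀ g : Polynomial K, f * g ∈ A}
      add_mem' := fun hf hg g => by
        rw [add_mul]; exact add_mem (hf g) (hg g)
      zero_mem' := fun g => by
        rw [zero_mul]; exact zero_mem A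
      smul_mem' := fun a f hf g => by
        rw [smul_eq_mul, mul_comm a f, mul_assoc]; exact hf (a * g) } with hCI
  haveI : CI.IsPrincipal := IsPrincipalIdealRing.principal CI
  set h := Submodule.IsPrincipal.generator CI with hgen
  have hspan : CI = Ideal.span {h} := (Ideal.span_singleton_generator CI).symm
  have hcond : ∀ f : Polynomial K, (∀ g : Polynomial K, f * g ∈ A) ↔ h ∣ f := by
    intro f
    have : f ∈ CI ↔ (∀ g : Polynomial K, f * g ∈ A) := Iff.rfl
    rw [← this, hspan, Ideal.mem_span_singleton]
  have hh0 : h ≠ 0 := by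
    intro h0
    have : h₀ ∈ CI := fun g => hh₀ g
    rw [hspan, Ideal.mem_span_singleton, h0, zero_dvd_iff] at this
    exact hh₀0 this
  have hhA : ∀ g : Polynomial K, h * g ∈ A := (hcond h).2 dvd_rfl
  -- spectrum ⊆ roots of h
  have hsub : subalgebraSpectrum A ⊆ {x | h.IsRoot x} := by
    intro α hα
    have hhmem : h ∈ A := by simpa using hhA 1
    have hhX : h * X ∈ A := hhA X
    rcases hα with hder | ⟨β, hβα, hval⟩
    · have e1 : (derivative h).eval α = 0 := hder h hhmem
      have e2 : (derivative (h * X)).eval α = 0 := hder _ hhX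
      rw [derivative_mul, derivative_X] at e2
      simp only [eval_add, eval_mul, eval_X, mul_one, e1, zero_mul, zero_add] at e2
      exact e2
    · have e1 : h.eval α = h.eval β := hval h hhmem
      have e2 : (h * X).eval α = (h * X).eval β := hval _ hhX
      simp only [eval_mul, eval_X] at e2
      rw [← e1] at e2
      have : h.eval α * (α - β) = 0 := by linear_combination e2
      rcases mul_eq_zero.1 this with h' | h'
      · exact h'
      · exact absurd (sub_eq_zero.1 h').symm hβα
  have hSp : (subalgebraSpectrum A).Finite := (finite_setOf_isRoot hh0).subset hsub
  set N := max 2 h.natDegree with hN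
  refine ⟨hSp, N, lt_of_lt_of_le one_lt_two (le_max_left _ _), fun i => ?_⟩
  have hdvd : h ∣ (∏ α ∈ hSp.toFinset, (X - C α)) ^ N := by
    apply Splits.dvd_of_roots_le_roots (IsAlgClosed.splits h) hh0
    rw [Multiset.le_iff_count]
    intro γ
    rw [roots_pow, roots_prod_X_sub_C, Multiset.count_nsmul]
    by_cases hγ : h.eval γ = 0
    · have hγSp : γ ∈ hSp.toFinset :=
        hSp.mem_toFinset.2 (root_mem_spectrum A h hh0 hcond hγ)
      have h1 : Multiset.count γ hSp.toFinset.val = 1 :=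
        Multiset.count_eq_one_of_mem hSp.toFinset.nodup hγSp
      rw [h1, mul_one]
      calc Multiset.count γ h.roots ≤ Multiset.card h.roots := Multiset.count_le_card _ _
        _ ≤ h.natDegree := card_roots' h
        _ ≤ N := le_max_right _ _
    · rw [count_roots, rootMultiplicity_eq_zero hγ]
      omega
  obtain ⟨k, hk⟩ := hdvd
  have : X ^ i * (∏ α ∈ hSp.toFinset, (X - C α)) ^ N = h * (k * X ^ i) := by
    rw [hk]; ring
  rw [this]
  exact hhA _
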